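/- arXiv:1702.04138 — 8 statements merged into one kernel-verified Lean document; each statement's English description precedes it below -/
import Mathlib

section
/- Let n ≥ 2 and 0 < p_1 ≤ … ≤ p_{n-1} < 1 ≥ p_n > 0, with λ = ∏_{j=1}^{n-1}(1-p_j). In any Nash equilibrium of the common-value all-pay auction with failures, for any two bidders i and j, their equilibrium expected profits conditional on participating are equal: π*_i = π*_j. -/
/-- Common-value all-pay auction with failures. Bidder `j` participates with probability
`p j` and bids according to the CDF `F j`; the expected payoff of bidder `i` (conditional on
participating) from a bid `x` is `∏_{j ≠ i} (p j * F j x + 1 - p j) - x`. -/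
noncomputable def payoff (n : ℕ) (p : ℕ → ℝ) (F : ℕ → ℝ → ℝ) (i : ℕ) (x : ℝ) : ℝ :=
  (∏ j ∈ (Finset.Icc 1 n).erase i, (p j * F j x + 1 - p j)) - x

theorem stmt4 (n : ℕ) (p : ℕ → ℝ) (hn : 2 ≤ n)
    (hp0 : 0 < p 1)
    (hmono : ∀ i j, 1 ≤ i → i ≤ j → j ≤ n → p i ≤ p j)
    (hpn1 : p (n - 1) < 1) (hpn : p n ≤ 1)
    (F : ℕ → ℝ → ℝ)
    -- each `F j` is a CDF on `[0,1]`
    (hFmono : ∀ j, 1 ≤ j → j ≤ n → MonotoneOn (F j) (Set.Icc 0 1))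
    (hF0 : ∀ j, 1 ≤ j → j ≤ n → ∀ x ∈ Set.Icc (0:ℝ) 1, 0 ≤ F j x ∧ F j x ≤ 1)
    (hF1 : ∀ j, 1 ≤ j → j ≤ n → F j 1 = 1)
    (πstar : ℕ → ℝ)
    -- Nash equilibrium: no bid gives more than the equilibrium payoff …
    (hNE : ∀ i, 1 ≤ i → i ≤ n → ∀ x ∈ Set.Icc (0:ℝ) 1, payoff n p F i x ≤ πstar i)
    -- … and each bidder attains its equilibrium payoff at the top of its support,
    -- a bid `b j` with `F j (b j) = 1`
    (hTop : ∀ j, 1 ≤ j → j ≤ n → ∃ b ∈ Set.Icc (0:ℝ) 1,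
      F j b = 1 ∧ payoff n p F j b = πstar j) :
    ∀ i j, 1 ≤ i → i ≤ n → 1 ≤ j → j ≤ n → πstar i = πstar j := by
  -- basic bounds on p
  have hp_pos : ∀ k, 1 ≤ k → k ≤ n → 0 < p k := fun k h1 h2 =>
    lt_of_lt_of_le hp0 (hmono 1 k le_rfl h1 h2)
  have hp_le1 : ∀ k, 1 ≤ k → k ≤ n → p k ≤ 1 := by
    intro k h1 h2
    rcases eq_or_lt_of_le h2 with rfl | hlt
    · exact hpn
    · have hk : k ≤ n - 1 := Nat.le_sub_one_of_lt hlt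
      have : p k ≤ p (n - 1) := hmono k (n - 1) h1 hk (Nat.sub_le n 1)
      linarith
  -- the key one-sided inequality
  have key : ∀ i j, 1 ≤ i → i ≤ n → 1 ≤ j → j ≤ n → i ≠ j → πstar j ≤ πstar i := by
    intro i j hi1 hin hj1 hjn hij
    obtain ⟨b, hb, hFb, hpay⟩ := hTop j hj1 hjn
    have h1 : payoff n p F i b ≤ πstar i := hNE i hi1 hin b hb
    have hmem : ∀ k ∈ Finset.Icc 1 n, (0:ℝ) ≤ p k * F k b + 1 - p k ∧
        p k * F k b + 1 - p k ≤ 1 := by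
      intro k hk
      simp only [Finset.mem_Icc] at hk
      obtain ⟨hF0k, hF1k⟩ := hF0 k hk.1 hk.2 b hb
      have hpk := hp_pos k hk.1 hk.2
      have hpk1 := hp_le1 k hk.1 hk.2
      constructor
      · nlinarith
      · nlinarith
    have hjmem : j ∈ (Finset.Icc 1 n).erase i := by
      simp [Finset.mem_Icc, hj1, hjn, Ne.symm hij]
    have himem : i ∈ (Finset.Icc 1 n).erase j := by
      simp [Finset.mem_Icc, hi1, hin, hij]
    set f : ℕ → ℝ := fun k => p k * F k b + 1 - p k with hf
    have e1 : ∏ k ∈ (Finset.Icc 1 n).erase i, f k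
        = f j * ∏ k ∈ ((Finset.Icc 1 n).erase i).erase j, f k :=
      (Finset.mul_prod_erase _ f hjmem).symm
    have e2 : ∏ k ∈ (Finset.Icc 1 n).erase j, f k
        = f i * ∏ k ∈ ((Finset.Icc 1 n).erase j).erase i, f k :=
      (Finset.mul_prod_erase _ f himem).symm
    have ecomm : ((Finset.Icc 1 n).erase i).erase j
        = ((Finset.Icc 1 n).erase j).erase i := Finset.erase_right_comm
    have hfj : f j = 1 := by simp [hf, hFb]
    have hfi : f i ≤ 1 := (hmem i (by simp [Finset.mem_Icc, hi1, hin])).2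
    have hprod_nonneg : 0 ≤ ∏ k ∈ ((Finset.Icc 1 n).erase i).erase j, f k :=
      Finset.prod_nonneg fun k hk =>
        (hmem k (Finset.mem_of_mem_erase (Finset.mem_of_mem_erase hk))).1
    have hcmp : ∏ k ∈ (Finset.Icc 1 n).erase j, f k
        ≤ ∏ k ∈ (Finset.Icc 1 n).erase i, f k := by
      rw [e1, e2, ← ecomm, hfj, one_mul]
      nlinarith
    have h2 : payoff n p F j b ≤ payoff n p F i b := by
      simp only [payoff]
      have : (fun k => p k * F k b + 1 - p k) = f := by ext k; simp [hf]
      linarith [hcmp]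
    linarith
  intro i j hi1 hin hj1 hjn
  rcases eq_or_ne i j with rfl | hij
  · rfl
  · exact le_antisymm (key j i hj1 hjn hi1 hin (Ne.symm hij)) (key i j hi1 hin hj1 hjn hij)
end

section
/- Let n ≥ 2 and 0 < p_1 ≤ … ≤ p_n ≤ 1 with λ = ∏_{j=1}^{n-1}(1-p_j). For 1 ≤ i ≤ n-1, the equilibrium expected bid of bidder i equals E[bid_i] = (1/p_i)·( 1/n + Σ_{k=1}^{i} ( (1-p_k)^{n-k} ∏_{j=1}^{k}(1-p_j) ) / ((n-k)(n-k+1)) − ( (1-p_i)^{n-i} ∏_{j=1}^{i}(1-p_j) ) / (n-i) − p_i λ ), where E[bid_i] = Σ_{k=1}^{i} ∫_{s_k}^{s_{k-1}} x f_i(x) dx with f_i(x) = (λ+x)^{(k+1-n)/(n-k)} / ( p_i (n-k) (∏_{j=1}^{k-1}(1-p_j))^{1/(n-k)} ) on [s_k, s_{k-1}), and s_k = (1-p_k)^{n-k}∏_{j=1}^{k-1}(1-p_j) − λ, s_0 = 1 − λ. -/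
open intervalIntegral Real Set

lemma aux1 (lam A B m : ℝ) (hm : 0 < m) (hA : 0 ≤ A) (hB : 0 ≤ B) :
    ∫ x in (A - lam)..(B - lam), x * (lam + x) ^ ((1 - m) / m) =
      (B ^ ((m + 1) / m) * (m / (m + 1)) - lam * (B ^ (1 / m) * m)) -
      (A ^ ((m + 1) / m) * (m / (m + 1)) - lam * (A ^ (1 / m) * m)) := by
  have hm' : m ≠ 0 := hm.ne'
  have hm1 : m + 1 ≠ 0 := by positivity
  have he : (1 - m) / m = 1 / m - 1 := by field_simp
  have h0 : (0:ℝ) < 1 / m := by positivity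
  have he1 : (-1:ℝ) < 1 / m - 1 := by linarith
  have he2 : (-1:ℝ) < 1 / m := by linarith
  have h1 : (∫ x in (A - lam)..(B - lam), x * (lam + x) ^ ((1 - m) / m))
      = ∫ u in A..B, (u - lam) * u ^ ((1 - m) / m) := by
    have := intervalIntegral.integral_comp_add_left
      (a := A - lam) (b := B - lam) (fun u => (u - lam) * u ^ ((1 - m) / m)) lam
    simp only [add_sub_cancel_left, add_sub_cancel] at this
    exact this
  rw [h1]
  have h2 : Set.EqOn (fun u : ℝ => (u - lam) * u ^ ((1 - m) / m))
      (fun u : ℝ => u ^ (1 / m) - lam * u ^ (1 / m - 1)) (Set.uIcc A B) := by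
    intro u hu
    have hu0 : 0 ≤ u := le_trans (le_inf hA hB) (Set.mem_Icc.mp hu).1
    simp only [he]
    rcases eq_or_lt_of_le hu0 with h | h
    · rw [← h, Real.zero_rpow h0.ne']
      ring
    · have hr : u ^ ((1:ℝ) / m) = u ^ ((1:ℝ) / m - 1) * u := by
        rw [← Real.rpow_add_one h.ne']
        ring_nf
      rw [hr]
      ring
  rw [intervalIntegral.integral_congr h2]
  rw [intervalIntegral.integral_sub (intervalIntegrable_rpow' he2)
    ((intervalIntegrable_rpow' he1).const_mul lam)]
  rw [intervalIntegral.integral_const_mul, integral_rpow (Or.inl he2),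
    integral_rpow (Or.inl he1)]
  have e1 : 1 / m + 1 = (m + 1) / m := by rw [add_div, div_self hm']; ring
  have e2 : 1 / m - 1 + 1 = 1 / m := by ring
  rw [e1, e2]
  field_simp
  ring

lemma aux2 (lam m : ℝ) (M : ℕ) (hM : (M : ℝ) = m) (hm : 0 < m) (c P : ℝ)
    (hc : 0 ≤ c) (hP : 0 < P) :
    ((c ^ M * P) ^ ((m + 1) / m) * (m / (m + 1)) -
        lam * ((c ^ M * P) ^ (1 / m) * m)) / (m * P ^ (1 / m))
      = c ^ (M + 1) * P / (m + 1) - lam * c := by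
  have hm' : m ≠ 0 := hm.ne'
  have hm1 : m + 1 ≠ 0 := by positivity
  have hPr : (0:ℝ) < P ^ ((1:ℝ) / m) := Real.rpow_pos_of_pos hP _
  have hcM : (0:ℝ) ≤ c ^ M := by positivity
  have h1 : (c ^ M * P) ^ ((m + 1) / m) = c ^ (M + 1) * P ^ ((m + 1) / m) := by
    rw [Real.mul_rpow hcM hP.le, ← Real.rpow_natCast c M, ← Real.rpow_mul hc]
    congr 1
    have : (M : ℝ) * ((m + 1) / m) = ((M + 1 : ℕ) : ℝ) := by
      push_cast
      rw [hM]
      field_simp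
    rw [this, Real.rpow_natCast]
  have h2 : (c ^ M * P) ^ ((1:ℝ) / m) = c * P ^ ((1:ℝ) / m) := by
    rw [Real.mul_rpow hcM hP.le, ← Real.rpow_natCast c M, ← Real.rpow_mul hc]
    congr 1
    have : (M : ℝ) * (1 / m) = 1 := by rw [hM]; field_simp
    rw [this, Real.rpow_one]
  have h3 : P ^ ((m + 1) / m) = P * P ^ ((1:ℝ) / m) := by
    have e : (m + 1) / m = 1 + 1 / m := by rw [add_div, div_self hm']
    rw [e, Real.rpow_add hP, Real.rpow_one]
  rw [h1, h2, h3]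
  field_simp

noncomputable def auxP (p : ℕ → ℝ) (k : ℕ) : ℝ := ∏ j ∈ Finset.Icc 1 (k - 1), (1 - p j)

noncomputable def auxc (p : ℕ → ℝ) (j : ℕ) : ℝ := if j = 0 then 1 else 1 - p j

noncomputable def auxW (p : ℕ → ℝ) (lam : ℝ) (n k : ℕ) : ℝ :=
  (auxc p (k - 1) ^ (n - k + 1) * auxP p k / ((n : ℝ) - ↑k + 1) - lam * auxc p (k - 1))
  - ((1 - p k) ^ (n - k + 1) * auxP p k / ((n : ℝ) - ↑k + 1) - lam * (1 - p k))

lemma auxkey (n : ℕ) (p : ℕ → ℝ) (hn : 2 ≤ n) (lam : ℝ) (s : ℕ → ℝ)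
    (hs0 : s 0 = 1 - lam)
    (hsk : ∀ k, 1 ≤ k → k ≤ n - 1 →
      s k = (1 - p k) ^ (n - k) * ∏ j ∈ Finset.Icc 1 (k - 1), (1 - p j) - lam)
    (k : ℕ) (hk1 : 1 ≤ k) (hk2 : k ≤ n - 1)
    (hple : ∀ j, 1 ≤ j → j ≤ k → p j ≤ 1)
    (hPk : 0 < auxP p k)
    (q : ℝ) (hq : q ≠ 0) :
    (∫ x in (s k)..(s (k - 1)),
        x * ((lam + x) ^ (((k : ℝ) + 1 - n) / ((n : ℝ) - k)) /
          (q * ((n : ℝ) - k) *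
            (∏ j ∈ Finset.Icc 1 (k - 1), (1 - p j)) ^ ((1 : ℝ) / ((n : ℝ) - k)))))
      = auxW p lam n k / q := by
  have hkn : k < n := by omega
  have hkr : (k : ℝ) < n := by exact_mod_cast hkn
  have hm : (0:ℝ) < (n : ℝ) - k := by linarith
  have hM : ((n - k : ℕ) : ℝ) = (n : ℝ) - k := by rw [Nat.cast_sub hkn.le]
  have hck : (0:ℝ) ≤ 1 - p k := by have := hple k hk1 le_rfl; linarith
  have hcB : (0:ℝ) ≤ auxc p (k - 1) := by
    unfold auxc
    split_ifs with h
    · norm_num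
    · have := hple (k - 1) (by omega) (by omega); linarith
  have hPfold : (∏ j ∈ Finset.Icc 1 (k - 1), (1 - p j)) = auxP p k := rfl
  have hAeq : s k = (1 - p k) ^ (n - k) * auxP p k - lam := by
    rw [hsk k hk1 hk2, hPfold]
  have hBeq : s (k - 1) = auxc p (k - 1) ^ (n - k) * auxP p k - lam := by
    rcases Nat.lt_or_ge k 2 with h | h
    · have hk1' : k = 1 := by omega
      subst hk1'
      simp [hs0, auxc, auxP]
    · obtain ⟨k', rfl⟩ : ∃ k', k = k' + 2 := ⟨k - 2, by omega⟩
      have e0 : k' + 2 - 1 = k' + 1 := rfl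
      rw [e0, hsk (k' + 1) (by omega) (by omega)]
      have e3 : auxc p (k' + 1) = 1 - p (k' + 1) := by unfold auxc; rw [if_neg (by omega)]
      have e4 : auxP p (k' + 2) = (∏ j ∈ Finset.Icc 1 (k' + 1 - 1), (1 - p j)) * (1 - p (k' + 1)) := by
        unfold auxP
        have : k' + 2 - 1 = k' + 1 := rfl
        rw [this, Finset.prod_Icc_succ_top (by omega)]
        norm_num
      have e5 : n - (k' + 1) = (n - (k' + 2)) + 1 := by omega
      rw [e3, e4, e5, pow_succ]
      ring
  have hA0 : (0:ℝ) ≤ (1 - p k) ^ (n - k) * auxP p k := mul_nonneg (pow_nonneg hck _) hPk.le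
  have hB0 : (0:ℝ) ≤ auxc p (k - 1) ^ (n - k) * auxP p k := mul_nonneg (pow_nonneg hcB _) hPk.le
  have hexp : ∀ x : ℝ, x * ((lam + x) ^ (((k : ℝ) + 1 - n) / ((n : ℝ) - k)) /
      (q * ((n : ℝ) - k) *
        (∏ j ∈ Finset.Icc 1 (k - 1), (1 - p j)) ^ ((1 : ℝ) / ((n : ℝ) - k))))
      = (x * (lam + x) ^ ((1 - ((n : ℝ) - k)) / ((n : ℝ) - k))) /
        (q * (((n : ℝ) - k) * (auxP p k) ^ ((1 : ℝ) / ((n : ℝ) - k)))) := by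
    intro x
    rw [show ((k : ℝ) + 1 - n) = 1 - ((n : ℝ) - k) from by ring, hPfold]
    ring
  simp only [hexp]
  rw [intervalIntegral.integral_div, hAeq, hBeq,
    aux1 lam ((1 - p k) ^ (n - k) * auxP p k) (auxc p (k - 1) ^ (n - k) * auxP p k)
      ((n : ℝ) - k) hm hA0 hB0]
  have eA := aux2 lam ((n : ℝ) - k) (n - k) hM hm (1 - p k) (auxP p k) hck hPk
  have eB := aux2 lam ((n : ℝ) - k) (n - k) hM hm (auxc p (k - 1)) (auxP p k) hcB hPk
  have ht : ((n : ℝ) - k) * (auxP p k) ^ ((1:ℝ) / ((n : ℝ) - k)) ≠ 0 :=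
    (mul_pos hm (Real.rpow_pos_of_pos hPk _)).ne'
  rw [div_eq_iff ht] at eA eB
  have hWeq : auxW p lam n k =
      (auxc p (k - 1) ^ (n - k + 1) * auxP p k / ((n : ℝ) - ↑k + 1) - lam * auxc p (k - 1))
      - ((1 - p k) ^ (n - k + 1) * auxP p k / ((n : ℝ) - ↑k + 1) - lam * (1 - p k)) := rfl
  rw [hWeq, eA, eB]
  field_simp

lemma auxclaim (n : ℕ) (hn : 2 ≤ n) (p : ℕ → ℝ) (lam : ℝ) :
    ∀ i, 1 ≤ i → i ≤ n - 1 →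
      ∑ k ∈ Finset.Icc 1 i, auxW p lam n k
        = 1 / n
          + (∑ k ∈ Finset.Icc 1 i,
              ((1 - p k) ^ (n - k) * ∏ j ∈ Finset.Icc 1 k, (1 - p j)) /
                (((n : ℝ) - k) * ((n : ℝ) - k + 1)))
          - ((1 - p i) ^ (n - i) * ∏ j ∈ Finset.Icc 1 i, (1 - p j)) / ((n : ℝ) - i)
          - lam * p i := by
  refine Nat.le_induction ?_ ?_
  · -- base case i = 1
    intro h1
    have hn0 : (n : ℝ) ≠ 0 := by positivity
    have hn1 : (2:ℝ) ≤ (n:ℝ) := by exact_mod_cast hn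
    have hn1' : (n : ℝ) - 1 ≠ 0 := by linarith
    simp only [Finset.Icc_self, Finset.sum_singleton, Finset.prod_singleton]
    have e1 : auxW p lam n 1 = 1 / ((n:ℝ) - 1 + 1) - lam
        - ((1 - p 1) ^ (n - 1 + 1) / ((n:ℝ) - 1 + 1) - lam * (1 - p 1)) := by
      unfold auxW auxc auxP
      norm_num
    have e2 : n - 1 + 1 = n := by omega
    have e3 : (1 - p 1) ^ (n - 1) * (1 - p 1) = (1 - p 1) ^ n := by
      rw [← pow_succ, e2]
    rw [e1, e2, e3]
    push_cast
    field_simp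
    ring_nf
    simp only [sq, mul_assoc, mul_inv_cancel_left₀ hn0, mul_inv_cancel₀ hn0]
    ring
  · -- inductive step
    intro i hi IH hin
    have IH' := IH (by omega)
    have hir : ((i:ℝ)) + 1 < (n:ℝ) := by
      have : i + 1 < n := by omega
      exact_mod_cast this
    have hd1 : (n : ℝ) - i ≠ 0 := by
      have : (i:ℝ) < n := by linarith
      intro h; linarith [sub_eq_zero.mp h]
    have hd2 : (n : ℝ) - (i + 1) ≠ 0 := by
      intro h; have := sub_eq_zero.mp h; linarith
    have hd3 : (n : ℝ) - (i + 1) + 1 ≠ 0 := by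
      intro h; nlinarith [sub_eq_zero.mp (by linarith : (n:ℝ) - (i + 1) + 1 - 0 = 0)]
    rw [Finset.sum_Icc_succ_top (by omega : 1 ≤ i + 1), IH',
      Finset.sum_Icc_succ_top (by omega : 1 ≤ i + 1)]
    -- rewrite auxW (i+1)
    have eW : auxW p lam n (i + 1) =
        ((1 - p i) ^ (n - i) * ∏ j ∈ Finset.Icc 1 i, (1 - p j)) / ((n:ℝ) - (i+1) + 1)
          - lam * (1 - p i)
        - ((1 - p (i + 1)) ^ (n - (i+1) + 1) * ∏ j ∈ Finset.Icc 1 i, (1 - p j)) / ((n:ℝ) - (i+1) + 1)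
          + lam * (1 - p (i + 1)) := by
      unfold auxW auxc auxP
      have e0 : i + 1 - 1 = i := rfl
      have e1 : n - (i + 1) + 1 = n - i := by omega
      rw [e0, if_neg (by omega), e1]
      push_cast
      ring
    have eP : ∏ j ∈ Finset.Icc 1 (i + 1), (1 - p j)
        = (∏ j ∈ Finset.Icc 1 i, (1 - p j)) * (1 - p (i + 1)) :=
      Finset.prod_Icc_succ_top (by omega) _
    have ePow : (1 - p (i + 1)) ^ (n - (i + 1)) * (1 - p (i + 1))
        = (1 - p (i + 1)) ^ (n - (i + 1) + 1) := (pow_succ _ _).symm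
    rw [eW, eP]
    push_cast
    field_simp
    ring

theorem stmt6 (n : ℕ) (p : ℕ → ℝ) (hn : 2 ≤ n)
    (hp0 : 0 < p 1)
    (hmono : ∀ i j, 1 ≤ i → i ≤ j → j ≤ n → p i ≤ p j)
    (hpn : p n ≤ 1)
    (lam : ℝ) (hlam : lam = ∏ j ∈ Finset.Icc 1 (n - 1), (1 - p j))
    (s : ℕ → ℝ) (hs0 : s 0 = 1 - lam)
    (hsk : ∀ k, 1 ≤ k → k ≤ n - 1 →
      s k = (1 - p k) ^ (n - k) * ∏ j ∈ Finset.Icc 1 (k - 1), (1 - p j) - lam)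
    (i : ℕ) (hi1 : 1 ≤ i) (hi2 : i ≤ n - 1)
    (hprod : ∀ k, 1 ≤ k → k ≤ i → 0 < ∏ j ∈ Finset.Icc 1 (k - 1), (1 - p j)) :
    ∑ k ∈ Finset.Icc 1 i, ∫ x in (s k)..(s (k - 1)),
        x * ((lam + x) ^ (((k : ℝ) + 1 - n) / ((n : ℝ) - k)) /
          (p i * ((n : ℝ) - k) *
            (∏ j ∈ Finset.Icc 1 (k - 1), (1 - p j)) ^ ((1 : ℝ) / ((n : ℝ) - k))))
      = (1 / p i) *
        (1 / n
          + (∑ k ∈ Finset.Icc 1 i,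
              ((1 - p k) ^ (n - k) * ∏ j ∈ Finset.Icc 1 k, (1 - p j)) /
                (((n : ℝ) - k) * ((n : ℝ) - k + 1)))
          - ((1 - p i) ^ (n - i) * ∏ j ∈ Finset.Icc 1 i, (1 - p j)) / ((n : ℝ) - i)
          - p i * lam) := by
  have hpi : 0 < p i := lt_of_lt_of_le hp0 (hmono 1 i le_rfl hi1 (by omega))
  have hkey : ∀ k ∈ Finset.Icc 1 i,
      (∫ x in (s k)..(s (k - 1)),
        x * ((lam + x) ^ (((k : ℝ) + 1 - n) / ((n : ℝ) - k)) /
          (p i * ((n : ℝ) - k) *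
            (∏ j ∈ Finset.Icc 1 (k - 1), (1 - p j)) ^ ((1 : ℝ) / ((n : ℝ) - k)))))
      = auxW p lam n k / p i := by
    intro k hk
    obtain ⟨hk1, hk2⟩ := Finset.mem_Icc.mp hk
    exact auxkey n p hn lam s hs0 hsk k hk1 (le_trans hk2 hi2)
      (fun j hj1 hj2 => le_trans (hmono j n hj1 (by omega) le_rfl) hpn)
      (hprod k hk1 hk2) (p i) hpi.ne'
  rw [Finset.sum_congr rfl hkey, ← Finset.sum_div, auxclaim n hn p lam i hi1 hi2]
  field_simp
end

section
/- Let n ≥ 2 and 0 < p_1 ≤ … ≤ p_n ≤ 1 with λ = ∏_{j=1}^{n-1}(1-p_j), and let E[bid_i] denote the equilibrium expected bids as in the paper's Theorem 4 (with E[bid_n] = (p_{n-1}/p_n) E[bid_{n-1}]). Then the sum-profit auctioneer's expected revenue satisfies Σ_{i=1}^{n} p_i E[bid_i] = 1 − λ(1 + Σ_{i=1}^{n-1} p_i). -/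
open Finset

private lemma aux_sum7 (g : ℕ → ℝ) (m : ℕ) :
    ∑ i ∈ Icc 1 m, ∑ k ∈ Icc 1 i, g k
      = ∑ k ∈ Icc 1 m, ((m : ℝ) - k + 1) * g k := by
  induction m with
  | zero => simp
  | succ m ih =>
    rw [Finset.sum_Icc_succ_top (by omega : 1 ≤ m + 1), ih,
        Finset.sum_Icc_succ_top (by omega : 1 ≤ m + 1),
        Finset.sum_Icc_succ_top (by omega : 1 ≤ m + 1)]
    have hS : ∑ k ∈ Icc 1 m, ((↑(m + 1) : ℝ) - ↑k + 1) * g k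
        = (∑ k ∈ Icc 1 m, ((m : ℝ) - k + 1) * g k) + ∑ k ∈ Icc 1 m, g k := by
      rw [← Finset.sum_add_distrib]
      refine Finset.sum_congr rfl fun k _ => ?_
      push_cast; ring
    rw [hS]
    push_cast; ring

theorem stmt7 (n : ℕ) (p : ℕ → ℝ) (hn : 2 ≤ n)
    (hp0 : 0 < p 1)
    (hmono : ∀ i j, 1 ≤ i → i ≤ j → j ≤ n → p i ≤ p j)
    (hpn : p n ≤ 1)
    (lam : ℝ) (hlam : lam = ∏ j ∈ Finset.Icc 1 (n - 1), (1 - p j))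
    (E : ℕ → ℝ)
    (hE : ∀ i, 1 ≤ i → i ≤ n - 1 →
      E i = (1 / p i) *
        (1 / n
          + (∑ k ∈ Finset.Icc 1 i,
              ((1 - p k) ^ (n - k) * ∏ j ∈ Finset.Icc 1 k, (1 - p j)) /
                (((n : ℝ) - k) * ((n : ℝ) - k + 1)))
          - ((1 - p i) ^ (n - i) * ∏ j ∈ Finset.Icc 1 i, (1 - p j)) / ((n : ℝ) - i)
          - p i * lam))
    (hEn : E n = (p (n - 1) / p n) * E (n - 1)) :
    ∑ i ∈ Finset.Icc 1 n, p i * E i = 1 - lam * (1 + ∑ i ∈ Finset.Icc 1 (n - 1), p i) := by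
  have hncast : ((n - 1 : ℕ) : ℝ) = (n : ℝ) - 1 := by
    have h1 : (1 : ℕ) ≤ n := by omega
    push_cast [h1]; ring
  have hpos : ∀ i, 1 ≤ i → i ≤ n → (0 : ℝ) < p i := fun i h1 h2 =>
    lt_of_lt_of_le hp0 (hmono 1 i le_rfl h1 h2)
  have hsplit : Icc 1 n = insert n (Icc 1 (n - 1)) := by
    ext x; simp only [mem_Icc, mem_insert]; omega
  have hnotmem : n ∉ Icc 1 (n - 1) := by simp only [mem_Icc]; omega
  rw [hsplit, Finset.sum_insert hnotmem]
  have hpn0 : p n ≠ 0 := (hpos n (by omega) le_rfl).ne'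
  have hEn' : p n * E n = p (n - 1) * E (n - 1) := by
    rw [hEn]; field_simp
  have hF : ∀ i ∈ Icc 1 (n - 1), p i * E i =
      1 / n
        + (∑ k ∈ Finset.Icc 1 i,
            ((1 - p k) ^ (n - k) * ∏ j ∈ Finset.Icc 1 k, (1 - p j)) /
              (((n : ℝ) - k) * ((n : ℝ) - k + 1)))
        - ((1 - p i) ^ (n - i) * ∏ j ∈ Finset.Icc 1 i, (1 - p j)) / ((n : ℝ) - i)
        - p i * lam := by
    intro i hi
    simp only [mem_Icc] at hi
    have hpi : p i ≠ 0 := (hpos i hi.1 (by omega)).ne'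
    rw [hE i hi.1 hi.2, ← mul_assoc, mul_one_div_cancel hpi, one_mul]
  rw [hEn', hF (n - 1) (by simp only [mem_Icc]; omega), Finset.sum_congr rfl hF]
  have hexp : n - (n - 1) = 1 := by omega
  rw [hexp, pow_one, show ((n : ℝ) - ↑(n - 1)) = 1 from by rw [hncast]; ring, div_one]
  simp only [Finset.sum_sub_distrib, Finset.sum_add_distrib, Finset.sum_const,
    Nat.card_Icc, nsmul_eq_mul, ← Finset.sum_mul]
  rw [aux_sum7]
  have hkey : (∑ k ∈ Icc 1 (n - 1),
        ((↑(n - 1) : ℝ) - k + 1) *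
          (((1 - p k) ^ (n - k) * ∏ j ∈ Finset.Icc 1 k, (1 - p j)) /
            (((n : ℝ) - k) * ((n : ℝ) - k + 1))))
      + (∑ k ∈ Icc 1 (n - 1),
          ((1 - p k) ^ (n - k) * ∏ j ∈ Finset.Icc 1 k, (1 - p j)) /
            (((n : ℝ) - k) * ((n : ℝ) - k + 1)))
      = ∑ k ∈ Icc 1 (n - 1),
          ((1 - p k) ^ (n - k) * ∏ j ∈ Finset.Icc 1 k, (1 - p j)) / ((n : ℝ) - k) := by
    rw [← Finset.sum_add_distrib]
    refine Finset.sum_congr rfl fun k hk => ?_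
    simp only [mem_Icc] at hk
    have hk1 : (k : ℝ) ≤ (n : ℝ) - 1 := by
      have : (k : ℝ) ≤ ((n - 1 : ℕ) : ℝ) := by exact_mod_cast hk.2
      rwa [hncast] at this
    have h1 : (n : ℝ) - k ≠ 0 := by
      have : (0 : ℝ) < (n : ℝ) - k := by linarith
      linarith
    have h2 : (n : ℝ) - k + 1 ≠ 0 := by
      have : (0 : ℝ) < (n : ℝ) - k := by linarith
      linarith
    rw [hncast]
    field_simp
    ring
  have hn0 : (n : ℝ) ≠ 0 := by positivity
  have hcard : ((n - 1 + 1 - 1 : ℕ) : ℝ) = (n : ℝ) - 1 := by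
    rw [show n - 1 + 1 - 1 = n - 1 from by omega, hncast]
  rw [hcard, hlam]
  have hinv : ((n : ℝ) - 1) * (1 / (n : ℝ)) + 1 / (n : ℝ) = 1 := by field_simp; ring
  linear_combination hkey + hinv
end

section
/- Let n ≥ 2 and 0 < p_1 ≤ … ≤ p_n ≤ 1 with λ = ∏_{j=1}^{n-1}(1-p_j). Define G(x) piecewise on [0, 1-λ] by G(x) = (λ+x)^{(n-k+1)/(n-k)} / (∏_{j=1}^{k-1}(1-p_j))^{1/(n-k)} for x ∈ [s_k, s_{k-1}), where s_k = (1-p_k)^{n-k}∏_{j=1}^{k-1}(1-p_j) − λ and s_0 = 1−λ. Then ∫_{0}^{1-λ} x G'(x) dx = n/(2n−1) − λ + Σ_{k=1}^{n-1} ( (1-p_k)^{2n-2k-1} ∏_{j=1}^{k}(1-p_j)^2 ) / (4(n-k)^2 − 1). -/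
open Finset

noncomputable def Qf (p : ℕ → ℝ) (k : ℕ) : ℝ := ∏ j ∈ Finset.Icc 1 k, (1 - p j)
noncomputable def uf (n : ℕ) (p : ℕ → ℝ) (k : ℕ) : ℝ :=
  if k = 0 then 1 else (1 - p k)^(2*(n-k)+1) * (Qf p (k-1))^2
noncomputable def tf (n : ℕ) (p : ℕ → ℝ) (k : ℕ) : ℝ :=
  if k = 0 then 1 else (1 - p k)^((n-k)+1) * Qf p (k-1)
noncomputable def df (n : ℕ) (p : ℕ → ℝ) (k : ℕ) : ℝ :=
  ((n:ℝ)-k)/(2*((n:ℝ)-k)-1) * uf n p k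

lemma tele1 (f : ℕ → ℝ) (M : ℕ) : ∑ k ∈ Finset.Icc 1 M, (f (k-1) - f k) = f 0 - f M := by
  induction M with
  | zero => simp
  | succ m ih =>
      rw [Finset.sum_Icc_succ_top (Nat.one_le_iff_ne_zero.mpr (Nat.succ_ne_zero m)), ih]
      simp only [Nat.add_sub_cancel]
      ring

lemma tele2 (f : ℕ → ℝ) (M : ℕ) : ∑ k ∈ Finset.Icc 1 M, (f k - f (k-1)) = f M - f 0 := by
  have h1 := tele1 f M
  have h : ∑ k ∈ Finset.Icc 1 M, (f k - f (k-1))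
      = -∑ k ∈ Finset.Icc 1 M, (f (k-1) - f k) := by
    rw [← Finset.sum_neg_distrib]
    apply Finset.sum_congr rfl; intros; ring
  rw [h, h1]; ring

lemma algk (M lam A1 A2 A3 A4 : ℝ) (hM : 1 ≤ M) :
    (M+1)/(2*M+1) * A1 - lam * A2 - ((M+1)/(2*M+1) * A3 - lam * A4)
    = ((M+1)/(2*(M+1)-1) * A1 - M/(2*M-1) * A3) + A3/(4*M^2-1) + lam*(A4 - A2) := by
  have h1 : 2*M-1 ≠ 0 := by nlinarith
  have h2 : 2*M+1 ≠ 0 := by nlinarith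
  have h3 : 4*M^2-1 ≠ 0 := by nlinarith
  have h4 : 2*(M+1)-1 = 2*M+1 := by ring
  rw [h4]
  have key : M/(2*M-1) - 1/(4*M^2-1) = (M+1)/(2*M+1) := by
    rw [div_sub_div _ _ h1 h3, div_eq_div_iff (mul_ne_zero h1 h3) h2]; ring
  linear_combination A3 * key

lemma evalAB (x R : ℝ) (hx : 0 ≤ x) (hR : 0 < R) (m q r : ℕ) (hm : m ≠ 0)
    (hq : q = m * r + 1) (e : ℝ) (he : e = (q:ℝ)) :
    (x ^ m * R) ^ (e/(m:ℝ)) / R ^ ((1:ℝ)/(m:ℝ)) = x ^ q * R ^ r := by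
  subst he
  have hm0 : ((m:ℝ)) ≠ 0 := Nat.cast_ne_zero.mpr hm
  have h1 : (x ^ m * R) ^ (((q : ℕ):ℝ)/(m:ℝ)) = x ^ q * R ^ (((q:ℕ):ℝ)/(m:ℝ)) := by
    rw [Real.mul_rpow (pow_nonneg hx m) hR.le]
    congr 1
    rw [← Real.rpow_natCast x m, ← Real.rpow_mul hx, ← Real.rpow_natCast x q]
    congr 1
    field_simp
  rw [h1, mul_div_assoc, ← Real.rpow_sub hR, ← Real.rpow_natCast R r]
  congr 1
  subst hq
  push_cast
  field_simp
  congr 1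
  field_simp
  ring

lemma piece (lam P a b : ℝ) (m : ℕ) (hm : m ≠ 0) (hP : 0 < P)
    (ha : 0 ≤ lam + a) (hb : 0 ≤ lam + b) :
    (∫ x in a..b, x * ((((m:ℝ) + 1) / (m:ℝ)) * (lam + x) ^ ((1:ℝ)/(m:ℝ)) / P ^ ((1:ℝ)/(m:ℝ))))
    = (((m:ℝ)+1)/(2*(m:ℝ)+1) * ((lam + b) ^ ((2*(m:ℝ)+1)/(m:ℝ)) / P ^ ((1:ℝ)/(m:ℝ)))
        - lam * ((lam + b) ^ (((m:ℝ)+1)/(m:ℝ)) / P ^ ((1:ℝ)/(m:ℝ))))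
      - (((m:ℝ)+1)/(2*(m:ℝ)+1) * ((lam + a) ^ ((2*(m:ℝ)+1)/(m:ℝ)) / P ^ ((1:ℝ)/(m:ℝ)))
        - lam * ((lam + a) ^ (((m:ℝ)+1)/(m:ℝ)) / P ^ ((1:ℝ)/(m:ℝ)))) := by
  have hm0 : (0:ℝ) < (m:ℝ) := by exact_mod_cast Nat.pos_of_ne_zero hm
  have hD : P ^ ((1:ℝ)/(m:ℝ)) ≠ 0 := (Real.rpow_pos_of_pos hP _).ne'
  have he1 : (1:ℝ) ≤ (2*(m:ℝ)+1)/(m:ℝ) := by rw [le_div_iff₀ hm0]; linarith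
  have he2 : (1:ℝ) ≤ ((m:ℝ)+1)/(m:ℝ) := by rw [le_div_iff₀ hm0]; linarith
  have key : ∀ x ∈ Set.uIcc a b,
      HasDerivAt (fun y => ((m:ℝ)+1)/(2*(m:ℝ)+1) * ((lam + y) ^ ((2*(m:ℝ)+1)/(m:ℝ)) / P ^ ((1:ℝ)/(m:ℝ)))
        - lam * ((lam + y) ^ (((m:ℝ)+1)/(m:ℝ)) / P ^ ((1:ℝ)/(m:ℝ))))
        (x * ((((m:ℝ) + 1) / (m:ℝ)) * (lam + x) ^ ((1:ℝ)/(m:ℝ)) / P ^ ((1:ℝ)/(m:ℝ)))) x := by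
    intro x hx
    have hx0 : 0 ≤ lam + x := by
      rcases Set.mem_uIcc.mp hx with h | h
      · linarith [h.1]
      · linarith [h.1]
    have hinner : HasDerivAt (fun y : ℝ => lam + y) 1 x := (hasDerivAt_id x).const_add lam
    have h1 : HasDerivAt (fun y => (lam + y) ^ ((2*(m:ℝ)+1)/(m:ℝ)))
        (((2*(m:ℝ)+1)/(m:ℝ)) * (lam + x) ^ ((2*(m:ℝ)+1)/(m:ℝ) - 1) * 1) x :=
      (Real.hasDerivAt_rpow_const (Or.inr he1)).comp x hinner
    have h2 : HasDerivAt (fun y => (lam + y) ^ (((m:ℝ)+1)/(m:ℝ)))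
        ((((m:ℝ)+1)/(m:ℝ)) * (lam + x) ^ (((m:ℝ)+1)/(m:ℝ) - 1) * 1) x :=
      (Real.hasDerivAt_rpow_const (Or.inr he2)).comp x hinner
    have H := ((h1.div_const (P ^ ((1:ℝ)/(m:ℝ)))).const_mul (((m:ℝ)+1)/(2*(m:ℝ)+1))).sub
      ((h2.div_const (P ^ ((1:ℝ)/(m:ℝ)))).const_mul lam)
    refine H.congr_deriv ?_
    have hsub1 : (2*(m:ℝ)+1)/(m:ℝ) - 1 = ((m:ℝ)+1)/(m:ℝ) := by field_simp; ring
    have hsub2 : ((m:ℝ)+1)/(m:ℝ) - 1 = 1/(m:ℝ) := by field_simp; ring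
    rw [hsub1, hsub2]
    have hsplit : (lam + x) ^ (((m:ℝ)+1)/(m:ℝ)) = (lam + x) * (lam + x) ^ ((1:ℝ)/(m:ℝ)) := by
      have h' : ((m:ℝ)+1)/(m:ℝ) = 1 + 1/(m:ℝ) := by field_simp
      rw [h', Real.rpow_add' hx0 (by positivity), Real.rpow_one]
    rw [hsplit]
    field_simp
    ring
  have hc : Continuous fun x : ℝ => (lam + x) ^ ((1:ℝ)/(m:ℝ)) := by
    apply continuous_iff_continuousAt.mpr
    intro x
    exact (continuousAt_const.add continuousAt_id).rpow_const (Or.inr (by positivity))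
  have hcont : Continuous fun x : ℝ =>
      x * ((((m:ℝ) + 1) / (m:ℝ)) * (lam + x) ^ ((1:ℝ)/(m:ℝ)) / P ^ ((1:ℝ)/(m:ℝ))) :=
    continuous_id.mul ((continuous_const.mul hc).div_const _)
  exact intervalIntegral.integral_eq_sub_of_hasDerivAt key (hcont.intervalIntegrable a b)



theorem stmt8 (n : ℕ) (p : ℕ → ℝ) (hn : 2 ≤ n)
    (hp0 : 0 < p 1)
    (hmono : ∀ i j, 1 ≤ i → i ≤ j → j ≤ n → p i ≤ p j)
    (hpn : p n ≤ 1)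
    (lam : ℝ) (hlam : lam = ∏ j ∈ Finset.Icc 1 (n - 1), (1 - p j))
    (s : ℕ → ℝ) (hs0 : s 0 = 1 - lam)
    (hsk : ∀ k, 1 ≤ k → k ≤ n - 1 →
      s k = (1 - p k) ^ (n - k) * ∏ j ∈ Finset.Icc 1 (k - 1), (1 - p j) - lam)
    (hprod : ∀ k, 1 ≤ k → k ≤ n - 1 → 0 < ∏ j ∈ Finset.Icc 1 (k - 1), (1 - p j)) :
    -- the integral ∫₀^{1-λ} x G'(x) dx, computed piecewise: on [s_k, s_{k-1}) the
    -- derivative of G(x) = (λ+x)^{(n-k+1)/(n-k)} / (∏_{j<k}(1-p_j))^{1/(n-k)} is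
    -- ((n-k+1)/(n-k)) (λ+x)^{1/(n-k)} / (∏_{j<k}(1-p_j))^{1/(n-k)}
    ∑ k ∈ Finset.Icc 1 (n - 1), ∫ x in (s k)..(s (k - 1)),
        x * ((((n : ℝ) - k + 1) / ((n : ℝ) - k)) * (lam + x) ^ ((1 : ℝ) / ((n : ℝ) - k)) /
          (∏ j ∈ Finset.Icc 1 (k - 1), (1 - p j)) ^ ((1 : ℝ) / ((n : ℝ) - k)))
      = (n : ℝ) / (2 * n - 1) - lam
          + ∑ k ∈ Finset.Icc 1 (n - 1),
              ((1 - p k) ^ (2 * n - 2 * k - 1) * ∏ j ∈ Finset.Icc 1 k, (1 - p j) ^ 2) /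
                (4 * ((n : ℝ) - k) ^ 2 - 1) := by
  have hstep : ∀ k ∈ Finset.Icc 1 (n-1),
      (∫ x in (s k)..(s (k - 1)),
        x * ((((n : ℝ) - k + 1) / ((n : ℝ) - k)) * (lam + x) ^ ((1 : ℝ) / ((n : ℝ) - k)) /
          (∏ j ∈ Finset.Icc 1 (k - 1), (1 - p j)) ^ ((1 : ℝ) / ((n : ℝ) - k))))
      = (df n p (k-1) - df n p k) + uf n p k / (4*((n:ℝ)-k)^2 - 1)
        + lam * (tf n p k - tf n p (k-1)) := by
    intro k hk
    obtain ⟨hk1, hk2⟩ := Finset.mem_Icc.mp hk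
    have hkn : k ≤ n := by omega
    have hm : n - k ≠ 0 := by omega
    have hcast : ((n - k : ℕ):ℝ) = (n:ℝ) - k := by
      rw [Nat.cast_sub hkn]
    have hQpos : 0 < ∏ j ∈ Finset.Icc 1 (k-1), (1 - p j) := hprod k hk1 hk2
    have hpk1 : p k ≤ 1 := le_trans (hmono k n hk1 hkn le_rfl) hpn
    have hbk : (0:ℝ) ≤ 1 - p k := by linarith
    have hA : lam + s k = (1 - p k)^(n-k) * ∏ j ∈ Finset.Icc 1 (k-1), (1 - p j) := by
      rw [hsk k hk1 hk2]; ring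
    have hA0 : 0 ≤ lam + s k := by
      rw [hA]; positivity
    have hM1 : (1:ℝ) ≤ ((n-k:ℕ):ℝ) := by exact_mod_cast Nat.one_le_iff_ne_zero.mpr hm
    have hk0 : ¬ k = 0 := by omega
    rw [← hcast]
    by_cases hk1' : k = 1
    · subst hk1'
      simp only [Nat.sub_self] at *
      have hq0 : (∏ j ∈ Finset.Icc 1 0, (1 - p j)) = 1 := by
        rw [Finset.Icc_eq_empty (by norm_num), Finset.prod_empty]
      have h1 : lam + s 0 = 1 := by rw [hs0]; ring
      rw [piece lam (∏ j ∈ Finset.Icc 1 0, (1-p j)) (s 1) (s 0) (n-1) hm hQpos hA0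
        (by rw [h1]; norm_num)]
      rw [hA, h1, hq0]
      rw [evalAB (1 - p 1) 1 hbk one_pos (n-1) (2*(n-1)+1) 2 hm (by ring) _ (by push_cast; ring)]
      rw [evalAB (1 - p 1) 1 hbk one_pos (n-1) ((n-1)+1) 1 hm (by ring) _ (by push_cast; ring)]
      simp only [Real.one_rpow]
      have hQf0 : Qf p 0 = 1 := by
        rw [Qf, Finset.Icc_eq_empty (by norm_num), Finset.prod_empty]
      simp only [uf, tf, df, if_neg (by norm_num : ¬ (1:ℕ) = 0), if_pos rfl, hQf0, eq_self_iff_true, if_true,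
        Nat.cast_zero, Nat.cast_one]
      rw [show ((n:ℝ)) = ((n-1:ℕ):ℝ) + 1 from by rw [Nat.cast_sub (by omega)]; ring]
      linear_combination algk ((n-1:ℕ):ℝ) lam 1 1
        ((1 - p 1)^(2*(n-1)+1) * (1:ℝ)^2) ((1 - p 1)^((n-1)+1) * (1:ℝ)^1) hM1
    · -- k ≥ 2
      have hk2' : 2 ≤ k := by omega
      have hpk1' : p (k-1) ≤ 1 := le_trans (hmono (k-1) n (by omega) (by omega) le_rfl) hpn
      have hbk' : (0:ℝ) ≤ 1 - p (k-1) := by linarith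
      have hQsplit : (∏ j ∈ Finset.Icc 1 (k-1), (1 - p j))
          = (∏ j ∈ Finset.Icc 1 (k-2), (1 - p j)) * (1 - p (k-1)) := by
        have h2' : k - 1 = (k-2)+1 := by omega
        conv_lhs => rw [h2']
        rw [Finset.prod_Icc_succ_top (by omega), ← h2']
      have hB : lam + s (k-1) = (1 - p (k-1))^(n-k) * ∏ j ∈ Finset.Icc 1 (k-1), (1 - p j) := by
        rw [hsk (k-1) (by omega) (by omega)]
        have he' : n - (k-1) = (n-k)+1 := by omega
        have h2' : k - 1 - 1 = k - 2 := by omega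
        rw [he', h2', hQsplit]
        ring
      have hB0 : 0 ≤ lam + s (k-1) := by
        rw [hB]; positivity
      rw [piece lam (∏ j ∈ Finset.Icc 1 (k-1), (1-p j)) (s k) (s (k-1)) (n-k) hm hQpos hA0 hB0]
      rw [hA, hB]
      rw [evalAB (1 - p (k-1)) _ hbk' hQpos (n-k) (2*(n-k)+1) 2 hm (by ring) _ (by push_cast; ring)]
      rw [evalAB (1 - p (k-1)) _ hbk' hQpos (n-k) ((n-k)+1) 1 hm (by ring) _ (by push_cast; ring)]
      rw [evalAB (1 - p k) _ hbk hQpos (n-k) (2*(n-k)+1) 2 hm (by ring) _ (by push_cast; ring)]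
      rw [evalAB (1 - p k) _ hbk hQpos (n-k) ((n-k)+1) 1 hm (by ring) _ (by push_cast; ring)]
      simp only [uf, tf, df, Qf, if_neg hk0, if_neg (show ¬ k - 1 = 0 by omega)]
      have hc2 : ((k-1:ℕ):ℝ) = (k:ℝ) - 1 := by rw [Nat.cast_sub hk1]; norm_num
      rw [hc2, ← hcast]
      rw [show ((n:ℝ) - ((k:ℝ) - 1)) = ((n-k:ℕ):ℝ) + 1 from by rw [hcast]; ring]
      rw [show 2*(n-(k-1))+1 = (2*(n-k)+1)+2 from by omega,
          show (n-(k-1))+1 = ((n-k)+1)+1 from by omega,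
          show k - 1 - 1 = k - 2 from by omega]
      rw [show (1 - p (k-1))^((2*(n-k)+1)+2) * (∏ j ∈ Finset.Icc 1 (k-2), (1 - p j))^2
            = (1 - p (k-1))^(2*(n-k)+1) * (∏ j ∈ Finset.Icc 1 (k-1), (1 - p j))^2
          from by rw [hQsplit]; ring]
      rw [show (1 - p (k-1))^(((n-k)+1)+1) * (∏ j ∈ Finset.Icc 1 (k-2), (1 - p j))
            = (1 - p (k-1))^((n-k)+1) * (∏ j ∈ Finset.Icc 1 (k-1), (1 - p j))
          from by rw [hQsplit]; ring]
      linear_combination algk ((n-k:ℕ):ℝ) lam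
        ((1 - p (k-1))^(2*(n-k)+1) * (∏ j ∈ Finset.Icc 1 (k-1), (1 - p j))^2)
        ((1 - p (k-1))^((n-k)+1) * (∏ j ∈ Finset.Icc 1 (k-1), (1 - p j)))
        ((1 - p k)^(2*(n-k)+1) * (∏ j ∈ Finset.Icc 1 (k-1), (1 - p j))^2)
        ((1 - p k)^((n-k)+1) * (∏ j ∈ Finset.Icc 1 (k-1), (1 - p j))) hM1
  rw [Finset.sum_congr rfl hstep]
  have h2 : ∀ k ∈ Finset.Icc 1 (n-1), uf n p k / (4*((n:ℝ)-k)^2 - 1)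
      = ((1 - p k) ^ (2*n - 2*k - 1) * ∏ j ∈ Finset.Icc 1 k, (1 - p j)^2) / (4*((n:ℝ)-k)^2 - 1) := by
    intro k hk
    obtain ⟨hk1, hk2⟩ := Finset.mem_Icc.mp hk
    congr 1
    rw [Finset.prod_pow]
    have hsplitk : (∏ j ∈ Finset.Icc 1 k, (1 - p j))
        = (∏ j ∈ Finset.Icc 1 (k-1), (1 - p j)) * (1 - p k) := by
      have h2' : k = (k-1)+1 := by omega
      conv_lhs => rw [h2']
      rw [Finset.prod_Icc_succ_top (by omega), ← h2']
    rw [hsplitk]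
    simp only [uf, Qf, if_neg (by omega : ¬ k = 0)]
    rw [show 2*(n-k)+1 = (2*n-2*k-1)+2 from by omega, pow_add]
    ring
  rw [Finset.sum_add_distrib, Finset.sum_add_distrib, tele1 (df n p) (n-1),
    Finset.sum_congr rfl h2]
  have h3 : ∑ k ∈ Finset.Icc 1 (n-1), lam * (tf n p k - tf n p (k-1))
      = lam * (tf n p (n-1) - tf n p 0) := by
    rw [← Finset.mul_sum, tele2 (tf n p) (n-1)]
  rw [h3]
  have hne : ¬ (n - 1 = 0) := by omega
  have hsplitn : lam = (∏ j ∈ Finset.Icc 1 (n-2), (1 - p j)) * (1 - p (n-1)) := by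
    rw [hlam]
    have h2' : n - 1 = (n-2)+1 := by omega
    conv_lhs => rw [h2']
    rw [Finset.prod_Icc_succ_top (by omega), ← h2']
  have hu1 : uf n p (n-1) = (1 - p (n-1))^3 * (∏ j ∈ Finset.Icc 1 (n-2), (1 - p j))^2 := by
    simp only [uf, Qf, if_neg hne]
    rw [show 2*(n-(n-1))+1 = 3 from by omega, show n-1-1 = n-2 from by omega]
  have ht1 : tf n p (n-1) = (1 - p (n-1))^2 * (∏ j ∈ Finset.Icc 1 (n-2), (1 - p j)) := by
    simp only [tf, Qf, if_neg hne]
    rw [show (n-(n-1))+1 = 2 from by omega, show n-1-1 = n-2 from by omega]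
  have hd1 : df n p (n-1) = uf n p (n-1) := by
    simp only [df]
    rw [show ((n-1:ℕ):ℝ) = (n:ℝ)-1 from by rw [Nat.cast_sub (by omega)]; norm_num]
    rw [show ((n:ℝ) - ((n:ℝ)-1)) = 1 from by ring]
    norm_num
  have hlast : lam * tf n p (n-1) = df n p (n-1) := by
    rw [hd1, hu1, ht1, hsplitn]
    ring
  have hd0 : df n p 0 = (n:ℝ)/(2*(n:ℝ)-1) := by
    simp [df, uf]
  have ht0 : tf n p 0 = 1 := by simp [tf]
  rw [hd0, ht0]
  linear_combination hlast
end

section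
/- Let n ≥ 2 be an integer and p ∈ (0,1]. With λ = (1-p)^{n-1} and f(x) = (λ+x)^{(2-n)/(n-1)}/(p(n-1)) on [0, 1−λ], one has ∫_0^{1-λ} x² f(x) dx = (1/p)·( 1/(2n−1) − (2/n)(1-p)^{n-1} + (1-p)^{2n-2} − (1-p)^{2n-1}·2(n-1)²/(n(2n−1)) ), and consequently the variance of a bidder's bid equals (1 − (1-p)^{2n-1})/((2n−1)p) − (1 − (1-p)^n)²/(n²p²). -/
theorem stmt12 (n : ℕ) (hn : 2 ≤ n) (p : ℝ) (hp : p ∈ Set.Ioc (0 : ℝ) 1)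
    (lam : ℝ) (hlam : lam = (1 - p) ^ (n - 1)) :
    (∫ x in (0 : ℝ)..(1 - lam),
        x ^ 2 * ((lam + x) ^ (((2 : ℝ) - n) / ((n : ℝ) - 1)) / (p * ((n : ℝ) - 1))))
      = (1 / p) * (1 / (2 * n - 1) - (2 / n) * (1 - p) ^ (n - 1) + (1 - p) ^ (2 * n - 2)
          - (1 - p) ^ (2 * n - 1) * (2 * ((n : ℝ) - 1) ^ 2 / (n * (2 * n - 1)))) ∧
    (∫ x in (0 : ℝ)..(1 - lam),
        x ^ 2 * ((lam + x) ^ (((2 : ℝ) - n) / ((n : ℝ) - 1)) / (p * ((n : ℝ) - 1))))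
      - ((1 / (n * p)) * (1 - (1 - p) ^ (n - 1) * (1 + p * ((n : ℝ) - 1)))) ^ 2
      = (1 - (1 - p) ^ (2 * n - 1)) / ((2 * n - 1) * p)
          - (1 - (1 - p) ^ n) ^ 2 / (n ^ 2 * p ^ 2) := by
  obtain ⟨hp0, hp1⟩ := hp
  set q : ℝ := 1 - p with hq
  have hq0 : 0 ≤ q := by simp [hq]; linarith
  have hq1 : q ≤ 1 := by simp [hq]; linarith
  set N : ℝ := (n : ℝ) with hNdef
  have hN : (2 : ℝ) ≤ N := by rw [hNdef]; exact_mod_cast hn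
  have hN1 : (0 : ℝ) < N - 1 := by linarith
  have hNne : N ≠ 0 := by linarith
  have h2N : (2 : ℝ) * N - 1 ≠ 0 := by nlinarith
  set a : ℝ := ((2 : ℝ) - N) / (N - 1) with ha
  have ha1 : a + 1 = 1 / (N - 1) := by rw [ha, div_add' _ _ _ hN1.ne']; congr 1; ring
  have ha2 : a + 2 = N / (N - 1) := by rw [ha, div_add' _ _ _ hN1.ne']; congr 1; ring
  have ha3 : a + 3 = (2 * N - 1) / (N - 1) := by rw [ha, div_add' _ _ _ hN1.ne']; congr 1; ring
  have ha_gt : -1 < a := by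
    rw [ha, lt_div_iff₀ hN1]; nlinarith
  have ha1pos : (0:ℝ) < a + 1 := by linarith
  have ha2pos : (0:ℝ) < a + 2 := by linarith
  -- lam facts
  have hlam0 : 0 ≤ lam := by rw [hlam]; positivity
  have hlam1 : lam ≤ 1 := by rw [hlam]; exact pow_le_one₀ hq0 hq1
  -- cast of n - 1
  have hcast : ((n - 1 : ℕ) : ℝ) = N - 1 := by
    have : (1:ℕ) ≤ n := by omega
    push_cast [this]; ring
  -- lam rpow identities
  have lam_rpow : ∀ r : ℝ, lam ^ r = q ^ ((N - 1) * r) := by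
    intro r
    rw [hlam, ← Real.rpow_natCast (1 - p) (n - 1), ← Real.rpow_mul hq0, hcast]
  have lam1 : lam ^ (a + 1) = q := by
    rw [lam_rpow, ha1]
    rw [mul_one_div, div_self hN1.ne', Real.rpow_one]
  have lam2 : lam ^ (a + 2) = q ^ n := by
    rw [lam_rpow, ha2]
    rw [mul_div_assoc', mul_comm, mul_div_assoc, div_self hN1.ne', mul_one,
      Real.rpow_natCast]
  have lam3 : lam ^ (a + 3) = q ^ (2 * n - 1) := by
    rw [lam_rpow, ha3]
    have : (N - 1) * ((2 * N - 1) / (N - 1)) = ((2 * n - 1 : ℕ) : ℝ) := by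
      have h' : ((2 * n - 1 : ℕ) : ℝ) = 2 * N - 1 := by
        have : (1:ℕ) ≤ 2 * n := by omega
        push_cast [Nat.cast_sub (by omega : 1 ≤ 2 * n)]; ring
      rw [h']; field_simp
    rw [this, Real.rpow_natCast]
  -- step 1: the integral
  have key : (∫ x in (0 : ℝ)..(1 - lam),
        x ^ 2 * ((lam + x) ^ a / (p * (N - 1))))
      = ((1 - q ^ (2*n-1)) / (a + 3) - 2 * lam * ((1 - q ^ n) / (a + 2))
          + lam ^ 2 * ((1 - q) / (a + 1))) / (p * (N - 1)) := by
    have comp : (∫ x in (0 : ℝ)..(1 - lam),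
          x ^ 2 * ((lam + x) ^ a / (p * (N - 1))))
        = ∫ u in lam..(1:ℝ), (u - lam) ^ 2 * (u ^ a / (p * (N - 1))) := by
      have := intervalIntegral.integral_comp_add_right
        (f := fun u => (u - lam) ^ 2 * (u ^ a / (p * (N - 1)))) (a := (0:ℝ))
        (b := 1 - lam) lam
      simp only [zero_add, sub_add_cancel] at this
      rw [← this]
      apply intervalIntegral.integral_congr
      intro x _
      simp [add_comm lam x]
    rw [comp]
    have congr2 : (∫ u in lam..(1:ℝ), (u - lam) ^ 2 * (u ^ a / (p * (N - 1))))
        = ∫ u in lam..(1:ℝ),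
            (u ^ (a+2) - 2 * lam * u ^ (a+1) + lam ^ 2 * u ^ a) / (p * (N - 1)) := by
      apply intervalIntegral.integral_congr
      intro u hu
      rw [Set.uIcc_of_le hlam1] at hu
      beta_reduce
      rcases eq_or_lt_of_le (hlam0.trans hu.1) with h0 | h0
      · -- u = 0, hence lam = 0
        have hu0 : u = 0 := h0.symm
        have hl0 : lam = 0 := le_antisymm (hu0 ▸ hu.1) hlam0
        simp [hu0, hl0, Real.zero_rpow ha1pos.ne', Real.zero_rpow ha2pos.ne']
      · rw [Real.rpow_add h0, Real.rpow_add h0, Real.rpow_one,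
          Real.rpow_two]
        ring
    rw [congr2]
    have i3 : IntervalIntegrable (fun u : ℝ => u ^ (a+2)) MeasureTheory.volume lam 1 :=
      intervalIntegral.intervalIntegrable_rpow' (by linarith)
    have i2 : IntervalIntegrable (fun u : ℝ => 2 * lam * u ^ (a+1)) MeasureTheory.volume lam 1 :=
      (intervalIntegral.intervalIntegrable_rpow' (by linarith)).const_mul _
    have i1 : IntervalIntegrable (fun u : ℝ => lam ^ 2 * u ^ a) MeasureTheory.volume lam 1 :=
      (intervalIntegral.intervalIntegrable_rpow' ha_gt).const_mul _
    simp only [div_eq_mul_inv]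
    rw [intervalIntegral.integral_mul_const, intervalIntegral.integral_add
      ((i3.sub i2)) i1, intervalIntegral.integral_sub i3 i2,
      intervalIntegral.integral_const_mul, intervalIntegral.integral_const_mul,
      integral_rpow (Or.inl (by linarith : (-1:ℝ) < a + 2)),
      integral_rpow (Or.inl (by linarith : (-1:ℝ) < a + 1)),
      integral_rpow (Or.inl ha_gt)]
    rw [show a + 2 + 1 = a + 3 by ring, show a + 1 + 1 = a + 2 by ring,
      lam1, lam2, lam3]
    simp only [Real.one_rpow]
    ring
  have e1 : q ^ (2*n-1) = q^(n-1) * q^(n-1) * q := by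
    rw [← pow_add, ← pow_succ]; congr 1; omega
  have e2 : q ^ (2*n-2) = q^(n-1) * q^(n-1) := by
    rw [← pow_add]; congr 1; omega
  have e3 : q ^ n = q^(n-1) * q := by
    rw [← pow_succ]; congr 1; omega
  have hNm1 : N - 1 ≠ 0 := hN1.ne'
  have hpne : p ≠ 0 := hp0.ne'
  constructor
  · rw [key, hlam, ha1, ha2, ha3, e1, e2, e3]
    field_simp
    ring
  · rw [key, hlam, ha1, ha2, ha3, e1, e3, hq]
    set t : ℝ := (1 - p) ^ (n - 1) with ht
    field_simp
    ring
end

section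
/- Let n ≥ 2 be an integer and p ∈ (0,1]. With λ = (1-p)^{n-1}, the expected revenue of a sum-profit auctioneer in the symmetric equilibrium, namely np·(1/(np))(1 − (1-p)^{n-1}(1+p(n-1))) = 1 − (1-p)^{n-1}(1 + p(n-1)), is strictly increasing in p on (0,1) and strictly increasing in n (for fixed p ∈ (0,1)). -/
open Set

lemma keyAntiP (k : ℕ) (hk : 1 ≤ k) :
    StrictAntiOn (fun x : ℝ => (1 - x) ^ k * (1 + x * k)) (Icc 0 1) := by
  apply strictAntiOn_of_deriv_neg (convex_Icc 0 1)
  · fun_prop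
  · intro x hx
    rw [interior_Icc] at hx
    obtain ⟨j, rfl⟩ : ∃ j, k = j + 1 := ⟨k - 1, by omega⟩
    have hu : HasDerivAt (fun x : ℝ => (1 - x)) (-1) x := by
      simpa using (hasDerivAt_id x).const_sub 1
    have hu' : HasDerivAt (fun x : ℝ => (1 - x) ^ (j + 1))
        (((j : ℝ) + 1) * (1 - x) ^ j * (-1)) x := by
      have := hu.fun_pow (j + 1)
      simpa using this
    have hv : HasDerivAt (fun x : ℝ => 1 + x * ((j : ℕ) + 1 : ℝ)) ((j : ℝ) + 1) x := by
      simpa using ((hasDerivAt_id x).mul_const ((j : ℝ) + 1)).const_add 1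
    have hprod := hu'.mul hv
    have hderiv : deriv (fun x : ℝ => (1 - x) ^ (j + 1) * (1 + x * ((j : ℕ) + 1 : ℝ))) x
        = ((j : ℝ) + 1) * (1 - x) ^ j * (-1) * (1 + x * ((j : ℝ) + 1))
          + (1 - x) ^ (j + 1) * ((j : ℝ) + 1) := hprod.deriv
    have hcast : ((j + 1 : ℕ) : ℝ) = (j : ℝ) + 1 := by push_cast; ring
    rw [show (fun x : ℝ => (1 - x) ^ (j + 1) * (1 + x * ((j + 1 : ℕ) : ℝ)))
        = (fun x : ℝ => (1 - x) ^ (j + 1) * (1 + x * ((j : ℕ) + 1 : ℝ))) by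
      simp [hcast], hderiv]
    have hxp : (0 : ℝ) < 1 - x := by linarith [hx.2]
    have hpow : (0 : ℝ) < (1 - x) ^ j := pow_pos hxp j
    have hjpos : (0 : ℝ) < (j : ℝ) + 1 := by positivity
    have hexp : (1 - x) ^ (j + 1) = (1 - x) ^ j * (1 - x) := pow_succ _ _
    rw [hexp]
    nlinarith [mul_pos (mul_pos hjpos hpow) (mul_pos hx.1 (show (0:ℝ) < (j:ℝ)+2 by positivity))]

lemma keyAntiN (p : ℝ) (hp : p ∈ Ioo (0 : ℝ) 1) :
    StrictAnti (fun k : ℕ => (1 - p) ^ k * (1 + p * k)) := by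
  apply strictAnti_nat_of_succ_lt
  intro k
  have hxp : (0 : ℝ) < 1 - p := by linarith [hp.2]
  have hpow : (0 : ℝ) < (1 - p) ^ k := pow_pos hxp k
  have : (1 - p) ^ (k + 1) = (1 - p) ^ k * (1 - p) := pow_succ _ _
  rw [this]
  push_cast
  nlinarith [hp.1, mul_pos hpow (mul_pos hp.1 hp.1)]

theorem stmt13 (n : ℕ) (hn : 2 ≤ n) :
    (∀ p q : ℝ, p ∈ Set.Ioo (0 : ℝ) 1 → q ∈ Set.Ioo (0 : ℝ) 1 → p < q →
        1 - (1 - p) ^ (n - 1) * (1 + p * ((n : ℝ) - 1))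
          < 1 - (1 - q) ^ (n - 1) * (1 + q * ((n : ℝ) - 1))) ∧
    (∀ p : ℝ, p ∈ Set.Ioo (0 : ℝ) 1 → ∀ m : ℕ, 2 ≤ m → m < n →
        1 - (1 - p) ^ (m - 1) * (1 + p * ((m : ℝ) - 1))
          < 1 - (1 - p) ^ (n - 1) * (1 + p * ((n : ℝ) - 1))) := by
  have hcast : ∀ m : ℕ, 2 ≤ m → ((m - 1 : ℕ) : ℝ) = (m : ℝ) - 1 := by
    intro m hm
    have : 1 ≤ m := by omega
    push_cast [Nat.cast_sub this]
    ring
  constructor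
  · intro p q hp hq hpq
    have hk : 1 ≤ n - 1 := by omega
    have h := keyAntiP (n - 1) hk (Icc_subset_Icc_right le_rfl ⟨hp.1.le, hp.2.le⟩)
      ⟨hq.1.le, hq.2.le⟩ hpq
    simp only at h
    rw [hcast n hn] at h
    linarith
  · intro p hp m hm hmn
    have h := keyAntiN p hp (show m - 1 < n - 1 by omega)
    simp only at h
    rw [hcast n hn, hcast m hm] at h
    linarith
end

section
/- Let n ≥ 2 be an integer and p ∈ (0,1]. With λ = (1-p)^{n-1} and g(x) = (n/(n-1))(λ+x)^{1/(n-1)} for x ∈ [0, 1−λ], one has ∫_0^{1-λ} x g(x) dx = n/(2n−1) + ((n−1)/(2n−1))(1-p)^{2n-1} − (1-p)^{n-1}. -/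
theorem stmt15 (n : ℕ) (hn : 2 ≤ n) (p : ℝ) (hp : p ∈ Set.Ioc (0 : ℝ) 1)
    (lam : ℝ) (hlam : lam = (1 - p) ^ (n - 1)) :
    ∫ x in (0 : ℝ)..(1 - lam),
        x * (((n : ℝ) / ((n : ℝ) - 1)) * (lam + x) ^ ((1 : ℝ) / ((n : ℝ) - 1)))
      = (n : ℝ) / (2 * n - 1) + (((n : ℝ) - 1) / (2 * n - 1)) * (1 - p) ^ (2 * n - 1)
          - (1 - p) ^ (n - 1) := by
  have hn2 : (2:ℝ) ≤ (n:ℝ) := by exact_mod_cast hn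
  have hN1 : (0:ℝ) < (n:ℝ) - 1 := by linarith
  set a : ℝ := 1 / ((n:ℝ) - 1) with ha_def
  have ha : 0 < a := by positivity
  have hq : 0 ≤ 1 - p := by linarith [hp.2]
  have hlam0 : 0 ≤ lam := by rw [hlam]; positivity
  have hlam1 : lam ≤ 1 := by rw [hlam]; exact pow_le_one₀ hq (by linarith [hp.1])
  have hc : (n:ℝ)/((n:ℝ)-1) = a + 1 := by rw [ha_def]; field_simp; ring
  have hcont : ∀ r : ℝ, 0 < r → Continuous fun x : ℝ => (lam + x) ^ r := fun r hr =>
    (continuous_const.add continuous_id).rpow_const (fun x => Or.inr hr.le)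
  have key : ∀ r : ℝ, 0 < r → ∫ x in (0:ℝ)..(1-lam), (lam + x) ^ r
      = (1 - lam ^ (r+1)) / (r+1) := by
    intro r hr
    rw [show (∫ x in (0:ℝ)..(1-lam), (lam + x) ^ r)
        = ∫ x in (0:ℝ)..(1-lam), (fun y : ℝ => y ^ r) (lam + x) from rfl,
      intervalIntegral.integral_comp_add_left (fun y : ℝ => y ^ r) lam,
      add_zero, show lam + (1 - lam) = 1 by ring,
      integral_rpow (Or.inl (by linarith)), Real.one_rpow]
  have hmain : Set.EqOn
      (fun x : ℝ => x * (((n : ℝ) / ((n : ℝ) - 1)) * (lam + x) ^ a))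
      (fun x : ℝ => (a+1) * ((lam+x)^(a+1) - lam * (lam+x)^a))
      (Set.uIcc (0:ℝ) (1-lam)) := by
    intro x hx
    rw [Set.uIcc_of_le (by linarith)] at hx
    have hx0 : 0 ≤ x := hx.1
    simp only
    rw [hc]
    by_cases h : lam + x = 0
    · have hl : lam = 0 := by linarith [hlam0, hx0, h.le, h.ge]
      have hx' : x = 0 := by rw [hl] at h; simpa using h
      rw [h, hx', hl, Real.zero_rpow ha.ne', Real.zero_rpow (by linarith : a + 1 ≠ 0)]
      ring
    · rw [Real.rpow_add_one h]; ring
  rw [intervalIntegral.integral_congr hmain,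
    intervalIntegral.integral_const_mul,
    intervalIntegral.integral_sub (g := fun x : ℝ => lam * (lam + x) ^ a)
      ((hcont (a+1) (by linarith)).intervalIntegrable _ _)
      ((continuous_const.mul (hcont a ha)).intervalIntegrable _ _),
    intervalIntegral.integral_const_mul, key a ha, key (a+1) (by linarith)]
  have hcast : ((n - 1 : ℕ) : ℝ) = (n:ℝ) - 1 := by
    have h1 : 1 ≤ n := by omega
    push_cast [Nat.cast_sub h1]; ring
  have hpow : ∀ r : ℝ, lam ^ r = (1-p) ^ (((n:ℝ)-1) * r) := by
    intro r
    rw [hlam, ← Real.rpow_natCast (1-p) (n-1), ← Real.rpow_mul hq, hcast]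
  have h1 : lam ^ (a+1) = (1-p)^n := by
    rw [hpow, show ((n:ℝ)-1)*(a+1) = ((n:ℕ):ℝ) by rw [ha_def]; field_simp; ring,
      Real.rpow_natCast]
  have h2 : lam ^ (a+1+1) = (1-p)^(2*n-1) := by
    rw [hpow, show ((n:ℝ)-1)*(a+1+1) = ((2*n-1:ℕ):ℝ) by
      push_cast [Nat.cast_sub (by omega : 1 ≤ 2*n)]
      rw [ha_def]; field_simp; ring, Real.rpow_natCast]
  rw [h1, h2, hlam]
  have hrel : (1-p)^(2*n-1) = (1-p)^(n-1) * (1-p)^n := by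
    rw [← pow_add]; congr 1; omega
  rw [hrel]
  have h2n : (2*(n:ℝ)-1) ≠ 0 := by linarith
  rw [ha_def]
  field_simp [(show (n:ℝ)*2-1 ≠ 0 by intro h; apply h2n; linarith)]
  ring
end

section
/- Let n ≥ 2 be an integer and p ∈ (0,1]. The variance of a bidder's equilibrium profit, Var = (n−1)/(n(2n−1)) − (1-p)^n/n + (p + 1/(2n−1))(1-p)^{2n-1}, is monotonically increasing in p on (0,1); equivalently, for all p ∈ (0,1), (1-p)^{n-1} ≥ 2np(1-p)^{2n-2}. -/
private lemma bern19 (k : ℕ) (x : ℝ) (hx : -1 ≤ x) : (1 - k*x)*(1+x)^k ≤ 1 := by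
  induction k with
  | zero => simp
  | succ k ih =>
    have h0 : (0:ℝ) ≤ 1 + x := by linarith
    have h1 : (0:ℝ) ≤ (1+x)^k := pow_nonneg h0 k
    have heq : (1 - ((k:ℕ)+1:ℕ)*x)*(1+x)^(k+1)
        = (1 - k*x)*(1+x)^k - ((k:ℝ)+1)*x^2*(1+x)^k := by push_cast; ring
    have h2 : (0:ℝ) ≤ ((k:ℝ)+1)*x^2*(1+x)^k := by positivity
    rw [heq]; linarith

private lemma key19 (k : ℕ) (p : ℝ) (hp : 0 < p) (hp1 : p ≤ 1) :
    2*((k:ℝ)+2)*p*(1-p)^(k+1) ≤ 1 := by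
  have hK0 : (0:ℝ) < (k:ℝ)+1 := by positivity
  have hx : (-1:ℝ) ≤ (1 - ((k:ℝ)+2)*p)/((k:ℝ)+1) := by
    rw [le_div_iff₀ hK0]; nlinarith
  have hb := bern19 (k+1) _ hx
  have h1x : 1 + (1 - ((k:ℝ)+2)*p)/((k:ℝ)+1) = (((k:ℝ)+2)/((k:ℝ)+1))*(1-p) := by
    field_simp; ring
  have h2 : 1 - ((k:ℕ)+1:ℕ)*((1 - ((k:ℝ)+2)*p)/((k:ℝ)+1)) = ((k:ℝ)+2)*p := by
    push_cast; field_simp; ring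
  rw [h2, h1x, mul_pow] at hb
  have hB : (2:ℝ) ≤ (((k:ℝ)+2)/((k:ℝ)+1))^(k+1) := by
    have := one_add_mul_le_pow (show (-2:ℝ) ≤ 1/((k:ℝ)+1) from le_trans (show (-2:ℝ) ≤ 0 by norm_num) (by positivity)) (k+1)
    have e1 : 1 + (1:ℝ)/((k:ℝ)+1) = ((k:ℝ)+2)/((k:ℝ)+1) := by field_simp; ring
    have e2 : 1 + ((k:ℕ)+1:ℕ)*((1:ℝ)/((k:ℝ)+1)) = 2 := by
      push_cast; field_simp; norm_num
    rw [e1, e2] at this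
    linarith
  have hA : (0:ℝ) ≤ ((k:ℝ)+2)*p*(1-p)^(k+1) :=
    mul_nonneg (mul_nonneg (by positivity) hp.le) (pow_nonneg (by linarith) _)
  nlinarith [pow_nonneg (show (0:ℝ) ≤ 1-p by linarith) (k+1)]

theorem stmt19 (n : ℕ) (hn : 2 ≤ n) :
    (∀ p : ℝ, p ∈ Set.Ioo (0 : ℝ) 1 →
      2 * n * p * (1 - p) ^ (2 * n - 2) ≤ (1 - p) ^ (n - 1)) ∧
    MonotoneOn (fun p : ℝ =>
        ((n : ℝ) - 1) / (n * (2 * n - 1)) - (1 - p) ^ n / n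
          + (p + 1 / (2 * n - 1)) * (1 - p) ^ (2 * n - 1))
      (Set.Ioo (0 : ℝ) 1) := by
  obtain ⟨k, rfl⟩ : ∃ k, n = k + 2 := ⟨n - 2, by omega⟩
  have e1 : 2*(k+2) - 2 = 2*k + 2 := by omega
  have e2 : (k+2) - 1 = k + 1 := by omega
  have e3 : 2*(k+2) - 1 = 2*k + 3 := by omega
  have part1 : ∀ p : ℝ, p ∈ Set.Ioo (0:ℝ) 1 →
      2 * ((k:ℝ)+2) * p * (1 - p) ^ (2*k+2) ≤ (1 - p) ^ (k+1) := by
    intro p hp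
    obtain ⟨hp0, hp1⟩ := hp
    have hq : (0:ℝ) ≤ (1-p)^(k+1) := pow_nonneg (by linarith) _
    have hkey := key19 k p hp0 hp1.le
    calc 2 * ((k:ℝ)+2) * p * (1 - p) ^ (2*k+2)
        = (2 * ((k:ℝ)+2) * p * (1-p)^(k+1)) * (1-p)^(k+1) := by
          rw [show 2*k+2 = (k+1)+(k+1) by omega, pow_add]; ring
      _ ≤ 1 * (1-p)^(k+1) := by
          apply mul_le_mul_of_nonneg_right hkey hq
      _ = (1-p)^(k+1) := one_mul _
  constructor
  · intro p hp
    have := part1 p hp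
    simp only [e1, e2]
    push_cast
    linarith
  · have hderiv : ∀ x ∈ Set.Ioo (0:ℝ) 1,
        HasDerivAt (fun p : ℝ =>
          (((k:ℝ)+2) - 1) / (((k:ℝ)+2) * (2 * ((k:ℝ)+2) - 1)) - (1 - p) ^ (k+2) / ((k:ℝ)+2)
            + (p + 1 / (2 * ((k:ℝ)+2) - 1)) * (1 - p) ^ (2*k+3))
          ((1-x)^(k+1) - 2*((k:ℝ)+2)*x*(1-x)^(2*k+2)) x := by
      intro x hx
      have h1 : HasDerivAt (fun p : ℝ => 1 - p) (-1) x := (hasDerivAt_id x).const_sub 1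
      have h2 : HasDerivAt (fun p : ℝ => (1-p)^(k+2)) (((k:ℕ)+2:ℕ) * (1-x)^(k+1) * (-1)) x := by
        have := h1.pow (k+2)
        simpa [Pi.pow_def] using this
      have h3 := h2.div_const ((k:ℝ)+2)
      have h4 : HasDerivAt (fun p : ℝ => p + 1 / (2 * ((k:ℝ)+2) - 1)) 1 x :=
        (hasDerivAt_id x).add_const _
      have h5 : HasDerivAt (fun p : ℝ => (1-p)^(2*k+3)) (((2*k+3:ℕ)) * (1-x)^(2*k+2) * (-1)) x := by
        have := h1.pow (2*k+3)
        simpa [Pi.pow_def] using this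
      have h6 := h4.mul h5
      have h7 := (h3.const_sub ((((k:ℝ)+2) - 1) / (((k:ℝ)+2) * (2 * ((k:ℝ)+2) - 1)))).add h6
      refine h7.congr_deriv ?_
      have hne : ((k:ℝ)+2) ≠ 0 := by positivity
      have hne2 : 2*((k:ℝ)+2)-1 ≠ 0 := by
        have := Nat.cast_nonneg (α := ℝ) k; intro h0; linarith
      push_cast
      rw [show 2*k+3 = (2*k+2)+1 by omega, pow_succ]
      field_simp
      ring
    have hmono := monotoneOn_of_deriv_nonneg (convex_Ioo (0:ℝ) 1)
      (f := fun p : ℝ =>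
          (((k:ℝ)+2) - 1) / (((k:ℝ)+2) * (2 * ((k:ℝ)+2) - 1)) - (1 - p) ^ (k+2) / ((k:ℝ)+2)
            + (p + 1 / (2 * ((k:ℝ)+2) - 1)) * (1 - p) ^ (2*k+3))
      (by fun_prop)
      (by
        rw [interior_Ioo]
        exact fun x hx => ((hderiv x hx).differentiableAt).differentiableWithinAt)
      (by
        rw [interior_Ioo]
        intro x hx
        rw [(hderiv x hx).deriv]
        have := part1 x hx
        linarith)
    convert hmono using 1
    ext p
    simp only [e1, e2, e3]
    push_cast
    ring
end
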